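/- arXiv:1608.00535 — 4 statements merged into one kernel-verified Lean document; each statement's English description precedes it below -/
import Mathlib

section
/- (Perron–Frobenius for regular stochastic matrices) If A is a regular m×m stochastic matrix with m ≥ 2, then there is a probability vector π such that for any initial probability vector π_0, the iterates π_0 Aⁿ converge to π as n → ∞, and π is the unique probability vector satisfying π A = π. -/
open Finset Matrix

/-- A stochastic matrix: nonnegative entries with each row summing to 1. -/
def IsStochastic {m : ℕ} (A : Matrix (Fin m) (Fin m) ℝ) : Prop :=
  (∀ x y, 0 ≤ A x y) ∧ ∀ x, ∑ y, A x y = 1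

/-- A probability (row) vector: nonnegative entries summing to 1. -/
def IsProbVec {m : ℕ} (v : Fin m → ℝ) : Prop :=
  (∀ x, 0 ≤ v x) ∧ ∑ x, v x = 1

/-- The Google matrix G = g·A + (1-g)·K, where K has all entries 1/m. -/
noncomputable def googleMatrix {m : ℕ} (A : Matrix (Fin m) (Fin m) ℝ) (g : ℝ) :
    Matrix (Fin m) (Fin m) ℝ :=
  g • A + (1 - g) • Matrix.of (fun _ _ : Fin m => (1 : ℝ) / m)

section helpers
variable {m : ℕ}

lemma vecMul_apply' (v : Fin m → ℝ) (M : Matrix (Fin m) (Fin m) ℝ) (j : Fin m) :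
    (v ᵥ* M) j = ∑ i, v i * M i j := rfl

lemma sum_vecMul_eq (v : Fin m → ℝ) (M : Matrix (Fin m) (Fin m) ℝ) :
    ∑ j, (v ᵥ* M) j = ∑ i, v i * ∑ j, M i j := by
  simp only [vecMul_apply', Finset.mul_sum]
  exact Finset.sum_comm

lemma stoch_mul {A B : Matrix (Fin m) (Fin m) ℝ} (hA : IsStochastic A)
    (hB : IsStochastic B) : IsStochastic (A * B) := by
  constructor
  · intro x y
    rw [Matrix.mul_apply]
    exact Finset.sum_nonneg fun z _ => mul_nonneg (hA.1 x z) (hB.1 z y)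
  · intro x
    have h : ∑ y, (A * B) x y = ∑ j, ((fun i => A x i) ᵥ* B) j := by
      simp [vecMul_apply', Matrix.mul_apply]
    rw [h, sum_vecMul_eq]
    simp [hB.2, hA.2 x]

lemma stoch_pow {A : Matrix (Fin m) (Fin m) ℝ} (hA : IsStochastic A) (k : ℕ) :
    IsStochastic (A ^ k) := by
  induction k with
  | zero =>
    constructor
    · intro x y; rw [pow_zero]; by_cases h : x = y <;> simp [Matrix.one_apply, h]
    · intro x; simp [Matrix.one_apply]
  | succ n ih => rw [pow_succ]; exact stoch_mul ih hA

lemma probVec_vecMul {v : Fin m → ℝ} {M : Matrix (Fin m) (Fin m) ℝ}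
    (hv : IsProbVec v) (hM : IsStochastic M) : IsProbVec (v ᵥ* M) := by
  constructor
  · intro j
    rw [vecMul_apply']
    exact Finset.sum_nonneg fun i _ => mul_nonneg (hv.1 i) (hM.1 i j)
  · rw [sum_vecMul_eq]; simp [hM.2, hv.2]

lemma sum_zero_vecMul {w : Fin m → ℝ} {M : Matrix (Fin m) (Fin m) ℝ}
    (hw : ∑ i, w i = 0) (hM : IsStochastic M) : ∑ j, (w ᵥ* M) j = 0 := by
  rw [sum_vecMul_eq]; simp [hM.2, hw]

lemma contraction {B : Matrix (Fin m) (Fin m) ℝ} {ε : ℝ}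
    (hB1 : ∀ x, ∑ y, B x y = 1) (hε : ∀ x y, ε ≤ B x y)
    {w : Fin m → ℝ} (hw : ∑ i, w i = 0) :
    ∑ j, |(w ᵥ* B) j| ≤ (1 - m * ε) * ∑ i, |w i| := by
  have key : ∀ j, |(w ᵥ* B) j| ≤ ∑ i, |w i| * (B i j - ε) := by
    intro j
    have h : (w ᵥ* B) j = ∑ i, w i * (B i j - ε) := by
      simp only [mul_sub, Finset.sum_sub_distrib, ← Finset.sum_mul, hw, zero_mul,
        sub_zero, vecMul_apply']
    rw [h]
    refine (Finset.abs_sum_le_sum_abs _ _).trans (le_of_eq ?_)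
    refine Finset.sum_congr rfl fun i _ => ?_
    rw [abs_mul, abs_of_nonneg (sub_nonneg.2 (hε i j))]
  calc ∑ j, |(w ᵥ* B) j| ≤ ∑ j, ∑ i, |w i| * (B i j - ε) :=
        Finset.sum_le_sum fun j _ => key j
    _ = ∑ i, |w i| * ∑ j, (B i j - ε) := by
        rw [Finset.sum_comm]
        exact Finset.sum_congr rfl fun i _ => (Finset.mul_sum _ _ _).symm
    _ = (1 - m * ε) * ∑ i, |w i| := by
        rw [Finset.mul_sum]
        refine Finset.sum_congr rfl fun i _ => ?_
        rw [Finset.sum_sub_distrib, hB1 i, Finset.sum_const, card_univ, Fintype.card_fin,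
          nsmul_eq_mul]
        ring

end helpers

/-- Perron–Frobenius for regular stochastic matrices. -/
theorem perron_frobenius_regular {m : ℕ} (hm : 2 ≤ m) (A : Matrix (Fin m) (Fin m) ℝ)
    (hA : IsStochastic A) (hreg : ∃ k : ℕ, ∀ x y, 0 < (A ^ k) x y) :
    ∃ π : Fin m → ℝ, IsProbVec π ∧
      (∀ π₀ : Fin m → ℝ, IsProbVec π₀ →
        Filter.Tendsto (fun n : ℕ => Matrix.vecMul π₀ (A ^ n)) Filter.atTop (nhds π)) ∧
      (∀ π' : Fin m → ℝ, IsProbVec π' ∧ Matrix.vecMul π' A = π' → π' = π) := by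
  classical
  obtain ⟨k, hk⟩ := hreg
  have hm0 : (m : ℝ) ≠ 0 := Nat.cast_ne_zero.2 (by omega)
  have hk1 : 0 < k := by
    rcases Nat.eq_zero_or_pos k with h | h
    · exfalso
      have hab : (⟨0, by omega⟩ : Fin m) ≠ ⟨1, by omega⟩ := by simp
      have h2 := hk ⟨0, by omega⟩ ⟨1, by omega⟩
      rw [h, pow_zero, Matrix.one_apply_ne hab] at h2
      exact lt_irrefl 0 h2
    · exact h
  set B := A ^ k with hBdef
  have hB : IsStochastic B := stoch_pow hA k
  obtain ⟨⟨x₀, y₀⟩, -, hmin⟩ := Finset.exists_min_image (univ : Finset (Fin m × Fin m))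
    (fun p => B p.1 p.2) ⟨(⟨0, by omega⟩, ⟨0, by omega⟩), mem_univ _⟩
  set ε := B x₀ y₀ with hεdef
  have hεpos : 0 < ε := hk x₀ y₀
  have hεle : ∀ x y, ε ≤ B x y := fun x y => hmin (x, y) (mem_univ _)
  set θ := 1 - (m : ℝ) * ε with hθdef
  have hθ1 : θ < 1 := by
    have : 0 < (m : ℝ) * ε := by positivity
    simp only [hθdef]; linarith
  have hθ0 : 0 ≤ θ := by
    have h1 : (m : ℝ) * ε ≤ 1 := by
      have hs := hB.2 x₀
      calc (m : ℝ) * ε = ∑ _y : Fin m, ε := by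
            rw [Finset.sum_const, card_univ, Fintype.card_fin, nsmul_eq_mul]
        _ ≤ ∑ y, B x₀ y := Finset.sum_le_sum fun y _ => hεle x₀ y
        _ = 1 := hs
    simp only [hθdef]; linarith
  -- iterated contraction for B
  have iterB : ∀ (w : Fin m → ℝ), (∑ i, w i = 0) →
      ∀ n, ∑ j, |(w ᵥ* B ^ n) j| ≤ θ ^ n * ∑ i, |w i| := by
    intro w hw n
    induction n with
    | zero => simp [Matrix.vecMul_one]
    | succ n ih =>
      have hsz : ∑ j, (w ᵥ* B ^ n) j = 0 := sum_zero_vecMul hw (stoch_pow hB n)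
      calc ∑ j, |(w ᵥ* B ^ (n + 1)) j| = ∑ j, |((w ᵥ* B ^ n) ᵥ* B) j| := by
            rw [pow_succ, ← vecMul_vecMul]
        _ ≤ (1 - (m : ℝ) * ε) * ∑ j, |(w ᵥ* B ^ n) j| := contraction hB.2 hεle hsz
        _ = θ * ∑ j, |(w ᵥ* B ^ n) j| := by rw [← hθdef]
        _ ≤ θ * (θ ^ n * ∑ i, |w i|) := mul_le_mul_of_nonneg_left ih hθ0
        _ = θ ^ (n + 1) * ∑ i, |w i| := by ring
  -- one-step non-expansiveness for A
  have stepA : ∀ (w : Fin m → ℝ), (∑ i, w i = 0) →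
      ∑ j, |(w ᵥ* A) j| ≤ ∑ i, |w i| := by
    intro w hw
    have h := contraction (ε := 0) hA.2 (fun x y => hA.1 x y) hw
    simpa using h
  -- uniqueness of B-fixed probability vectors
  have uniqB : ∀ p q : Fin m → ℝ, IsProbVec p → IsProbVec q →
      p ᵥ* B = p → q ᵥ* B = q → p = q := by
    intro p q hp hq hfp hfq
    have hw : ∑ i, (p - q) i = 0 := by
      simp [Pi.sub_apply, Finset.sum_sub_distrib, hp.2, hq.2]
    have h1 : ∑ j, |((p - q) ᵥ* B) j| ≤ (1 - (m : ℝ) * ε) * ∑ i, |(p - q) i| :=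
      contraction hB.2 hεle hw
    have h2 : (p - q) ᵥ* B = p - q := by rw [Matrix.sub_vecMul, hfp, hfq]
    rw [h2] at h1
    have hnn : 0 ≤ ∑ i, |(p - q) i| := Finset.sum_nonneg fun i _ => abs_nonneg _
    have hz : ∑ i, |(p - q) i| = 0 := by nlinarith [hεpos, hm0]
    funext j
    have h3 := (Finset.sum_eq_zero_iff_of_nonneg
      (fun i _ => abs_nonneg ((p - q) i))).1 hz j (mem_univ j)
    have h4 : p j - q j = 0 := by simpa [Pi.sub_apply] using abs_eq_zero.1 h3
    linarith
  -- the sequence starting at the uniform vector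
  set u : Fin m → ℝ := fun _ => (m : ℝ)⁻¹ with hudef
  have hu : IsProbVec u := by
    constructor
    · intro x; positivity
    · rw [hudef, Finset.sum_const, card_univ, Fintype.card_fin, nsmul_eq_mul]
      field_simp
  set v : ℕ → Fin m → ℝ := fun n => u ᵥ* B ^ n with hvdef
  have hvprob : ∀ n, IsProbVec (v n) := fun n => probVec_vecMul hu (stoch_pow hB n)
  have hdist : ∀ n, dist (v n) (v (n + 1)) ≤ 2 * θ ^ n := by
    intro n
    have hw : ∑ i, (u - u ᵥ* B) i = 0 := by
      simp [Pi.sub_apply, Finset.sum_sub_distrib, hu.2, (probVec_vecMul hu hB).2]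
    have hvd : v n - v (n + 1) = (u - u ᵥ* B) ᵥ* B ^ n := by
      rw [Matrix.sub_vecMul, vecMul_vecMul, ← pow_succ']
    have hbd : ∑ i, |(u - u ᵥ* B) i| ≤ 2 := by
      have h1 : ∀ i, |(u - u ᵥ* B) i| ≤ u i + (u ᵥ* B) i := by
        intro i
        have := abs_sub (u i) ((u ᵥ* B) i)
        rw [abs_of_nonneg (hu.1 i), abs_of_nonneg ((probVec_vecMul hu hB).1 i)] at this
        simpa [Pi.sub_apply] using this
      calc ∑ i, |(u - u ᵥ* B) i| ≤ ∑ i, (u i + (u ᵥ* B) i) :=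
            Finset.sum_le_sum fun i _ => h1 i
        _ = 2 := by rw [Finset.sum_add_distrib, hu.2, (probVec_vecMul hu hB).2]; norm_num
    rw [dist_pi_le_iff (by positivity)]
    intro j
    calc dist (v n j) (v (n + 1) j) = |(v n - v (n + 1)) j| := by
          rw [Real.dist_eq]; simp [Pi.sub_apply]
      _ ≤ ∑ j', |(v n - v (n + 1)) j'| :=
          Finset.single_le_sum (f := fun j' => |(v n - v (n + 1)) j'|)
            (fun i _ => abs_nonneg _) (mem_univ j)
      _ = ∑ j', |((u - u ᵥ* B) ᵥ* B ^ n) j'| := by rw [hvd]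
      _ ≤ θ ^ n * ∑ i, |(u - u ᵥ* B) i| := iterB _ hw n
      _ ≤ θ ^ n * 2 := mul_le_mul_of_nonneg_left hbd (pow_nonneg hθ0 n)
      _ = 2 * θ ^ n := by ring
  have hcs : CauchySeq v := cauchySeq_of_le_geometric θ 2 hθ1 hdist
  obtain ⟨π, hπt⟩ := cauchySeq_tendsto_of_complete hcs
  have hcoord : ∀ j, Filter.Tendsto (fun n => v n j) Filter.atTop (nhds (π j)) :=
    fun j => tendsto_pi_nhds.1 hπt j
  have hπprob : IsProbVec π := by
    constructor
    · intro j
      exact ge_of_tendsto (hcoord j) (Filter.Eventually.of_forall fun n => (hvprob n).1 j)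
    · have hsumt : Filter.Tendsto (fun n => ∑ j, v n j) Filter.atTop (nhds (∑ j, π j)) :=
        tendsto_finset_sum _ fun j _ => hcoord j
      have heq : (fun n => ∑ j, v n j) = fun _ => (1 : ℝ) := funext fun n => (hvprob n).2
      rw [heq] at hsumt
      exact tendsto_nhds_unique hsumt tendsto_const_nhds
  have hπB : π ᵥ* B = π := by
    have hBlim : Filter.Tendsto (fun n => v n ᵥ* B) Filter.atTop (nhds (π ᵥ* B)) := by
      rw [tendsto_pi_nhds]
      intro j
      simp only [vecMul_apply']
      exact tendsto_finset_sum _ fun i _ => (hcoord i).mul_const _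
    have hshift : (fun n => v n ᵥ* B) = fun n => v (n + 1) := by
      funext n
      show (u ᵥ* B ^ n) ᵥ* B = u ᵥ* B ^ (n + 1)
      rw [vecMul_vecMul, ← pow_succ]
    rw [hshift] at hBlim
    have hlim2 : Filter.Tendsto (fun n => v (n + 1)) Filter.atTop (nhds π) :=
      hπt.comp (Filter.tendsto_add_atTop_nat 1)
    exact tendsto_nhds_unique hBlim hlim2
  have hfixgen : ∀ (q : Fin m → ℝ), q ᵥ* A = q → ∀ n, q ᵥ* A ^ n = q := by
    intro q hq n
    induction n with
    | zero => simp [Matrix.vecMul_one]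
    | succ n ih => rw [pow_succ, ← vecMul_vecMul, ih, hq]
  have hπA : π ᵥ* A = π := by
    refine uniqB (π ᵥ* A) π (probVec_vecMul hπprob hA) hπprob ?_ hπB
    have hcomm : A * B = B * A := ((Commute.pow_self A k).eq).symm
    calc (π ᵥ* A) ᵥ* B = π ᵥ* (A * B) := vecMul_vecMul _ _ _
      _ = π ᵥ* (B * A) := by rw [hcomm]
      _ = (π ᵥ* B) ᵥ* A := (vecMul_vecMul _ _ _).symm
      _ = π ᵥ* A := by rw [hπB]
  refine ⟨π, hπprob, ?_, ?_⟩
  · -- convergence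
    intro π₀ hπ₀
    set w : Fin m → ℝ := π₀ - π with hwdef
    have hwsum : ∑ i, w i = 0 := by
      simp [hwdef, Pi.sub_apply, Finset.sum_sub_distrib, hπ₀.2, hπprob.2]
    have hfix : ∀ n, π ᵥ* A ^ n = π := hfixgen π hπA
    have hdiff : ∀ n, π₀ ᵥ* A ^ n - π = w ᵥ* A ^ n := fun n => by
      rw [hwdef, Matrix.sub_vecMul, hfix n]
    set d : ℕ → ℝ := fun n => ∑ j, |(w ᵥ* A ^ n) j| with hddef
    have hd0 : ∀ n, 0 ≤ d n := fun n => by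
      simp only [hddef]
      exact Finset.sum_nonneg fun j _ => abs_nonneg _
    have hanti : Antitone d := by
      refine antitone_nat_of_succ_le fun n => ?_
      have hsz : ∑ j, (w ᵥ* A ^ n) j = 0 := sum_zero_vecMul hwsum (stoch_pow hA n)
      calc d (n + 1) = ∑ j, |((w ᵥ* A ^ n) ᵥ* A) j| := by
            rw [hddef]; simp only [pow_succ, ← vecMul_vecMul]
        _ ≤ d n := stepA _ hsz
    have hsub : ∀ n, d (k * n) ≤ θ ^ n * d 0 := by
      intro n
      calc d (k * n) = ∑ j, |(w ᵥ* B ^ n) j| := by rw [hddef, hBdef, ← pow_mul]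
        _ ≤ θ ^ n * ∑ i, |w i| := iterB w hwsum n
        _ = θ ^ n * d 0 := by rw [hddef]; simp [Matrix.vecMul_one]
    have hinf : Filter.Tendsto d Filter.atTop (nhds (⨅ n, d n)) :=
      tendsto_atTop_ciInf hanti ⟨0, by rintro x ⟨n, rfl⟩; exact hd0 n⟩
    have hmono : StrictMono (fun n => k * n) := fun a b h =>
      Nat.mul_lt_mul_of_pos_left h hk1
    have hsubt : Filter.Tendsto (fun n => d (k * n)) Filter.atTop (nhds (⨅ n, d n)) :=
      hinf.comp hmono.tendsto_atTop
    have hto0 : Filter.Tendsto (fun n => d (k * n)) Filter.atTop (nhds 0) := by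
      refine squeeze_zero (fun n => hd0 _) hsub ?_
      have h := tendsto_pow_atTop_nhds_zero_of_lt_one hθ0 hθ1
      simpa using h.mul_const (d 0)
    have hiz : (⨅ n, d n) = 0 := tendsto_nhds_unique hsubt hto0
    have hdto0 : Filter.Tendsto d Filter.atTop (nhds 0) := hiz ▸ hinf
    rw [tendsto_pi_nhds]
    intro j
    rw [tendsto_iff_dist_tendsto_zero]
    refine squeeze_zero (fun n => dist_nonneg) (fun n => ?_) hdto0
    rw [Real.dist_eq]
    have heq : (π₀ ᵥ* A ^ n) j - π j = (w ᵥ* A ^ n) j := by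
      rw [← hdiff n]; simp [Pi.sub_apply]
    rw [heq]
    simp only [hddef]
    exact Finset.single_le_sum (f := fun i => |(w ᵥ* A ^ n) i|)
      (fun i _ => abs_nonneg _) (mem_univ j)
  · -- uniqueness
    rintro π' ⟨hπ'p, hπ'A⟩
    exact uniqB π' π hπ'p hπprob (hfixgen π' hπ'A k) hπB
end

section
/- For two probability vectors π_0, π_0' and the Google matrix G = gA + (1-g)K, the total variation distance contracts: ‖π_0 G - π_0' G‖_1 ≤ g · ‖π_0 - π_0'‖_1; consequently π_0 Gⁿ converges geometrically with rate g to the unique stationary distribution. -/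
open Finset Matrix

lemma gm_apply {m : ℕ} (A : Matrix (Fin m) (Fin m) ℝ) (g : ℝ) (y x : Fin m) :
    googleMatrix A g y x = g * A y x + (1 - g) * (1 / m) := by
  simp [googleMatrix, Matrix.add_apply, Matrix.smul_apply, smul_eq_mul]

lemma key {m : ℕ} {A : Matrix (Fin m) (Fin m) ℝ} (hA : IsStochastic A) {g : ℝ} (hg0 : 0 ≤ g)
    (d : Fin m → ℝ) (hd : ∑ y, d y = 0) :
    ∑ x, |vecMul d (googleMatrix A g) x| ≤ g * ∑ y, |d y| := by
  have hform : ∀ x, vecMul d (googleMatrix A g) x = g * ∑ y, d y * A y x := by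
    intro x
    simp only [vecMul, dotProduct, gm_apply]
    have : ∑ y, d y * (g * A y x + (1 - g) * (1 / m))
        = g * ∑ y, d y * A y x + (1 - g) * (1 / m) * ∑ y, d y := by
      rw [Finset.mul_sum, Finset.mul_sum, ← Finset.sum_add_distrib]
      exact Finset.sum_congr rfl fun y _ => by ring
    rw [this, hd, mul_zero, add_zero]
  calc ∑ x, |vecMul d (googleMatrix A g) x|
      ≤ ∑ x, ∑ y, |d y| * (g * A y x) := by
        apply Finset.sum_le_sum
        intro x _
        rw [hform x, Finset.mul_sum]
        refine le_trans (Finset.abs_sum_le_sum_abs _ _) (Finset.sum_le_sum fun y _ => ?_)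
        rw [abs_mul, abs_mul, abs_of_nonneg hg0, abs_of_nonneg (hA.1 y x)]
        ring_nf; exact le_refl _
    _ = g * ∑ y, |d y| := by
        rw [Finset.sum_comm, Finset.mul_sum]
        refine Finset.sum_congr rfl fun y _ => ?_
        rw [← Finset.mul_sum, ← Finset.mul_sum, hA.2 y]
        ring

lemma key_sum {m : ℕ} {A : Matrix (Fin m) (Fin m) ℝ} (hA : IsStochastic A) (g : ℝ)
    (d : Fin m → ℝ) (hd : ∑ y, d y = 0) :
    ∑ x, vecMul d (googleMatrix A g) x = 0 := by
  simp only [vecMul, dotProduct]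
  rw [Finset.sum_comm]
  have : ∀ y : Fin m, ∑ x, d y * googleMatrix A g y x
      = d y * (g + (1 - g) * (m * (1 / m))) := by
    intro y
    rw [← Finset.mul_sum]
    congr 1
    simp only [gm_apply, Finset.sum_add_distrib, ← Finset.mul_sum, hA.2 y]
    simp [Finset.sum_const, mul_comm]
  rw [Finset.sum_congr rfl fun y _ => this y, ← Finset.sum_mul, hd, zero_mul]

lemma diff_step {m : ℕ} (A : Matrix (Fin m) (Fin m) ℝ) (g : ℝ)
    (π π₀ : Fin m → ℝ) (hstat : Matrix.vecMul π (googleMatrix A g) = π) (n : ℕ) :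
    (fun y => Matrix.vecMul π₀ ((googleMatrix A g) ^ (n+1)) y - π y)
      = Matrix.vecMul
        (fun y => Matrix.vecMul π₀ ((googleMatrix A g) ^ n) y - π y)
        (googleMatrix A g) := by
  have h1 : Matrix.vecMul π₀ ((googleMatrix A g) ^ (n+1))
      = Matrix.vecMul (Matrix.vecMul π₀ ((googleMatrix A g) ^ n)) (googleMatrix A g) := by
    rw [pow_succ, ← Matrix.vecMul_vecMul]
  have h2 : Matrix.vecMul (Matrix.vecMul π₀ ((googleMatrix A g) ^ n) - π) (googleMatrix A g)
      = Matrix.vecMul (Matrix.vecMul π₀ ((googleMatrix A g) ^ n)) (googleMatrix A g)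
        - Matrix.vecMul π (googleMatrix A g) := Matrix.sub_vecMul _ _ _
  funext y
  have h3 : (fun y => Matrix.vecMul π₀ ((googleMatrix A g) ^ n) y - π y)
      = Matrix.vecMul π₀ ((googleMatrix A g) ^ n) - π := rfl
  rw [h3, h2, hstat, h1]
  rfl

lemma diff_zero_sum {m : ℕ} {A : Matrix (Fin m) (Fin m) ℝ} (hA : IsStochastic A) (g : ℝ)
    (π π₀ : Fin m → ℝ) (hπ : IsProbVec π) (h₀ : IsProbVec π₀)
    (hstat : Matrix.vecMul π (googleMatrix A g) = π) (n : ℕ) :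
    ∑ y, (Matrix.vecMul π₀ ((googleMatrix A g) ^ n) y - π y) = 0 := by
  induction n with
  | zero => simp [Finset.sum_sub_distrib, h₀.2, hπ.2]
  | succ k ihk =>
    have := diff_step A g π π₀ hstat k
    calc ∑ y, (Matrix.vecMul π₀ ((googleMatrix A g) ^ (k+1)) y - π y)
        = ∑ y, Matrix.vecMul
            (fun y => Matrix.vecMul π₀ ((googleMatrix A g) ^ k) y - π y)
            (googleMatrix A g) y :=
          Finset.sum_congr rfl fun y _ => congrFun this y
      _ = 0 := key_sum hA g _ ihk

/-- the Google matrix contracts the total variation (ℓ¹) distance by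
a factor g, hence iterates converge geometrically to the stationary distribution. -/
theorem google_l1_contraction {m : ℕ} (A : Matrix (Fin m) (Fin m) ℝ)
    (hA : IsStochastic A) (g : ℝ) (hg0 : 0 ≤ g) (hg1 : g < 1) :
    (∀ π₀ π₀' : Fin m → ℝ, IsProbVec π₀ → IsProbVec π₀' →
      ∑ x, |Matrix.vecMul π₀ (googleMatrix A g) x - Matrix.vecMul π₀' (googleMatrix A g) x|
        ≤ g * ∑ x, |π₀ x - π₀' x|) ∧
    (∀ π : Fin m → ℝ, IsProbVec π → Matrix.vecMul π (googleMatrix A g) = π →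
      ∀ π₀ : Fin m → ℝ, IsProbVec π₀ → ∀ n : ℕ,
        ∑ x, |Matrix.vecMul π₀ ((googleMatrix A g) ^ n) x - π x|
          ≤ g ^ n * ∑ x, |π₀ x - π x|) := by
  constructor
  · intro π₀ π₀' h₀ h₀'
    have hd : ∑ y, (π₀ - π₀') y = 0 := by
      simp [Finset.sum_sub_distrib, h₀.2, h₀'.2]
    have := key hA hg0 (π₀ - π₀') hd
    rw [Matrix.sub_vecMul] at this
    simpa [Pi.sub_apply] using this
  · intro π hπ hstat π₀ h₀ n
    induction n with
    | zero => simp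
    | succ n ih =>
      have hstep := diff_step A g π π₀ hstat n
      calc ∑ x, |Matrix.vecMul π₀ ((googleMatrix A g) ^ (n+1)) x - π x|
          = ∑ x, |Matrix.vecMul
              (fun y => Matrix.vecMul π₀ ((googleMatrix A g) ^ n) y - π y)
              (googleMatrix A g) x| :=
            Finset.sum_congr rfl fun x _ => by rw [congrFun hstep x]
        _ ≤ g * ∑ x, |Matrix.vecMul π₀ ((googleMatrix A g) ^ n) x - π x| :=
            key hA hg0 _ (diff_zero_sum hA g π π₀ hπ h₀ hstat n)
        _ ≤ g * (g ^ n * ∑ x, |π₀ x - π x|) := by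
            exact mul_le_mul_of_nonneg_left ih hg0
        _ = g ^ (n+1) * ∑ x, |π₀ x - π x| := by ring
end

section
/- If π and π' are the stationary distributions of Google matrices G = gA + (1-g)K and G' = gA' + (1-g)K built from stochastic matrices A and A', then ‖π - π'‖_1 ≤ g/(1-g) · max_x ‖A_x - A'_x‖_1, where A_x denotes the x-th row; i.e., PageRank is stable under perturbations of the transition matrix. -/
open Finset Matrix

/-- PageRank stability under perturbation of the transition matrix. -/
theorem google_pagerank_stability {m : ℕ} (A A' : Matrix (Fin m) (Fin m) ℝ)
    (hA : IsStochastic A) (hA' : IsStochastic A')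
    (g : ℝ) (hg0 : 0 ≤ g) (hg1 : g < 1)
    (π π' : Fin m → ℝ) (hπ : IsProbVec π) (hπ' : IsProbVec π')
    (hstat : Matrix.vecMul π (googleMatrix A g) = π)
    (hstat' : Matrix.vecMul π' (googleMatrix A' g) = π') :
    ∑ x, |π x - π' x| ≤ g / (1 - g) * ⨆ x : Fin m, ∑ y, |A x y - A' x y| := by
  have hg1' : 0 < 1 - g := by linarith
  have hm : m ≠ 0 := by
    rintro rfl
    have := hπ.2
    simp at this
  set M := ⨆ x : Fin m, ∑ y, |A x y - A' x y| with hM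
  have hbdd : BddAbove (Set.range fun x : Fin m => ∑ y, |A x y - A' x y|) :=
    (Set.finite_range _).bddAbove
  have hMle : ∀ x, ∑ y, |A x y - A' x y| ≤ M := fun x => le_ciSup hbdd x
  have hM0 : 0 ≤ M := by
    haveI : Nonempty (Fin m) := ⟨⟨0, Nat.pos_of_ne_zero hm⟩⟩
    exact le_trans (Finset.sum_nonneg fun y _ => abs_nonneg _) (hMle (Classical.arbitrary _))
  have key : ∀ x, π x - π' x =
      g * (∑ y, π y * A y x - ∑ y, π' y * A' y x) := by
    intro x
    have h1 := congrFun hstat x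
    have h2 := congrFun hstat' x
    simp only [googleMatrix, Matrix.vecMul, dotProduct, Matrix.add_apply,
      Matrix.smul_apply, Matrix.of_apply, smul_eq_mul] at h1 h2
    have e1 : ∑ y, π y * (g * A y x + (1 - g) * (1 / m)) =
        g * ∑ y, π y * A y x + (1 - g) * (1 / m) := by
      rw [Finset.sum_congr rfl (fun y _ => by ring : ∀ y ∈ Finset.univ,
        π y * (g * A y x + (1 - g) * (1 / m)) =
          g * (π y * A y x) + (1 - g) * (1 / m) * π y)]
      rw [Finset.sum_add_distrib, ← Finset.mul_sum, ← Finset.mul_sum, hπ.2, mul_one]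
    have e2 : ∑ y, π' y * (g * A' y x + (1 - g) * (1 / m)) =
        g * ∑ y, π' y * A' y x + (1 - g) * (1 / m) := by
      rw [Finset.sum_congr rfl (fun y _ => by ring : ∀ y ∈ Finset.univ,
        π' y * (g * A' y x + (1 - g) * (1 / m)) =
          g * (π' y * A' y x) + (1 - g) * (1 / m) * π' y)]
      rw [Finset.sum_add_distrib, ← Finset.mul_sum, ← Finset.mul_sum, hπ'.2, mul_one]
    rw [e1] at h1; rw [e2] at h2
    linarith [h1, h2]
  set D := ∑ x, |π x - π' x| with hD
  have main : D ≤ g * (D + M) := by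
    have step : ∀ x, |π x - π' x| ≤
        g * ((∑ y, |π y - π' y| * A y x) + (∑ y, π' y * |A y x - A' y x|)) := by
      intro x
      rw [key x, abs_mul, abs_of_nonneg hg0]
      refine mul_le_mul_of_nonneg_left ?_ hg0
      have split : ∑ y, π y * A y x - ∑ y, π' y * A' y x =
          (∑ y, (π y - π' y) * A y x) + ∑ y, π' y * (A y x - A' y x) := by
        rw [← Finset.sum_add_distrib, ← Finset.sum_sub_distrib]
        exact Finset.sum_congr rfl fun y _ => by ring
      rw [split]
      calc |(∑ y, (π y - π' y) * A y x) + ∑ y, π' y * (A y x - A' y x)|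
          ≤ |∑ y, (π y - π' y) * A y x| + |∑ y, π' y * (A y x - A' y x)| := abs_add_le _ _
        _ ≤ (∑ y, |π y - π' y| * A y x) + ∑ y, π' y * |A y x - A' y x| := by
            gcongr
            · calc |∑ y, (π y - π' y) * A y x| ≤ ∑ y, |(π y - π' y) * A y x| :=
                  Finset.abs_sum_le_sum_abs _ _
                _ = ∑ y, |π y - π' y| * A y x := Finset.sum_congr rfl fun y _ => by
                    rw [abs_mul, abs_of_nonneg (hA.1 y x)]
            · calc |∑ y, π' y * (A y x - A' y x)| ≤ ∑ y, |π' y * (A y x - A' y x)| :=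
                  Finset.abs_sum_le_sum_abs _ _
                _ = ∑ y, π' y * |A y x - A' y x| := Finset.sum_congr rfl fun y _ => by
                    rw [abs_mul, abs_of_nonneg (hπ'.1 y)]
    calc D ≤ ∑ x, g * ((∑ y, |π y - π' y| * A y x) + (∑ y, π' y * |A y x - A' y x|)) :=
          Finset.sum_le_sum fun x _ => step x
      _ = g * ((∑ x, ∑ y, |π y - π' y| * A y x) + ∑ x, ∑ y, π' y * |A y x - A' y x|) := by
          rw [← Finset.mul_sum, Finset.sum_add_distrib]
      _ ≤ g * (D + M) := by
          refine mul_le_mul_of_nonneg_left ?_ hg0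
          gcongr
          · rw [Finset.sum_comm]
            have : ∑ y, ∑ x, |π y - π' y| * A y x = ∑ y, |π y - π' y| := by
              refine Finset.sum_congr rfl fun y _ => ?_
              rw [← Finset.mul_sum, hA.2 y, mul_one]
            rw [this]
          · rw [Finset.sum_comm]
            calc ∑ y, ∑ x, π' y * |A y x - A' y x| = ∑ y, π' y * ∑ x, |A y x - A' y x| := by
                  refine Finset.sum_congr rfl fun y _ => (Finset.mul_sum _ _ _).symm
              _ ≤ ∑ y, π' y * M :=
                  Finset.sum_le_sum fun y _ => mul_le_mul_of_nonneg_left (hMle y) (hπ'.1 y)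
              _ = M := by rw [← Finset.sum_mul, hπ'.2, one_mul]
  rw [div_mul_eq_mul_div, le_div_iff₀ hg1']
  nlinarith [main]
end

section
/- For a stochastic matrix G with all entries bounded below by δ > 0, any two stationary distributions coincide; moreover, for any probability vector π_0, ‖π_0 Gⁿ - π‖_1 ≤ (1 - mδ)ⁿ ‖π_0 - π‖_1, where π is the stationary distribution and m is the number of states. -/
open Finset Matrix

lemma doeblin_contract_step {m : ℕ} (G : Matrix (Fin m) (Fin m) ℝ)
    (hG : IsStochastic G) (δ : ℝ) (hlb : ∀ x y, δ ≤ G x y)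
    (v : Fin m → ℝ) (hv : ∑ x, v x = 0) :
    ∑ y, |Matrix.vecMul v G y| ≤ (1 - m * δ) * ∑ x, |v x| := by
  have key : ∀ y, Matrix.vecMul v G y = ∑ x, v x * (G x y - δ) := by
    intro y
    simp [Matrix.vecMul, dotProduct, mul_sub, Finset.sum_sub_distrib,
      ← Finset.sum_mul, hv]
  calc ∑ y, |Matrix.vecMul v G y| ≤ ∑ y, ∑ x, |v x| * (G x y - δ) := by
        apply Finset.sum_le_sum; intro y _
        rw [key]
        refine (Finset.abs_sum_le_sum_abs _ _).trans ?_
        apply Finset.sum_le_sum; intro x _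
        rw [abs_mul]
        exact mul_le_mul_of_nonneg_left
          (le_of_eq (abs_of_nonneg (by linarith [hlb x y]))) (abs_nonneg _)
    _ = ∑ x, |v x| * (1 - m * δ) := by
        rw [Finset.sum_comm]
        refine Finset.sum_congr rfl fun x _ => ?_
        rw [← Finset.mul_sum]
        congr 1
        rw [Finset.sum_sub_distrib, hG.2 x]
        simp [mul_comm]
    _ = (1 - m * δ) * ∑ x, |v x| := by
        rw [Finset.mul_sum]
        exact Finset.sum_congr rfl fun x _ => mul_comm _ _

/-- a stochastic matrix with entries bounded below by δ > 0 has a unique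
stationary distribution and iterates converge geometrically with rate 1 - mδ. -/
theorem doeblin_contraction {m : ℕ} (G : Matrix (Fin m) (Fin m) ℝ)
    (hG : IsStochastic G) (δ : ℝ) (hδ : 0 < δ) (hlb : ∀ x y, δ ≤ G x y)
    (π : Fin m → ℝ) (hπ : IsProbVec π) (hstat : Matrix.vecMul π G = π) :
    (∀ π' : Fin m → ℝ, IsProbVec π' → Matrix.vecMul π' G = π' → π' = π) ∧
      ∀ π₀ : Fin m → ℝ, IsProbVec π₀ → ∀ n : ℕ,
        ∑ x, |Matrix.vecMul π₀ (G ^ n) x - π x|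
          ≤ (1 - m * δ) ^ n * ∑ x, |π₀ x - π x| := by
  rcases Nat.eq_zero_or_pos m with hm | hm
  · exfalso
    have := hπ.2
    subst hm
    simp at this
  have hmδ1 : (m : ℝ) * δ ≤ 1 := by
    obtain ⟨x⟩ := Fin.pos_iff_nonempty.mp hm
    calc (m : ℝ) * δ = ∑ _y : Fin m, δ := by simp [mul_comm]
      _ ≤ ∑ y, G x y := Finset.sum_le_sum fun y _ => hlb x y
      _ = 1 := hG.2 x
  have hmδ0 : 0 ≤ 1 - (m : ℝ) * δ := by linarith
  -- key contraction for differences of probability vectors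
  have hsub : ∀ v : Fin m → ℝ, Matrix.vecMul v G - π = Matrix.vecMul (v - π) G := by
    intro v
    rw [Matrix.sub_vecMul, hstat]
  constructor
  · intro π' hπ' hstat'
    have hv : ∑ x, (π' - π) x = 0 := by
      simp [Finset.sum_sub_distrib, hπ.2, hπ'.2]
    have h := doeblin_contract_step G hG δ hlb (π' - π) hv
    rw [← hsub π', hstat'] at h
    have hpos : (0 : ℝ) < (m : ℝ) * δ := by positivity
    have hzero : ∑ x, |(π' - π) x| = 0 := by
      nlinarith [Finset.sum_nonneg (fun x (_ : x ∈ Finset.univ) => abs_nonneg ((π' - π) x))]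
    have : ∀ x ∈ Finset.univ, |(π' - π) x| = 0 := by
      intro x hx
      exact (Finset.sum_eq_zero_iff_of_nonneg (fun x _ => abs_nonneg _)).mp hzero x hx
    funext x
    have := this x (Finset.mem_univ x)
    have : π' x - π x = 0 := by simpa [abs_eq_zero] using this
    linarith
  · intro π₀ hπ₀ n
    induction n with
    | zero => simp [Matrix.vecMul_one]
    | succ n ih =>
      have hsum : ∑ x, Matrix.vecMul π₀ (G ^ n) x - ∑ x, π x = 0 := by
        have : ∀ k : ℕ, ∑ x, Matrix.vecMul π₀ (G ^ k) x = 1 := by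
          intro k
          induction k with
          | zero => simpa using hπ₀.2
          | succ k ihk =>
            rw [pow_succ, ← Matrix.vecMul_vecMul]
            calc ∑ y, Matrix.vecMul (Matrix.vecMul π₀ (G ^ k)) G y
                = ∑ x, Matrix.vecMul π₀ (G ^ k) x * ∑ y, G x y := by
                  simp only [Matrix.vecMul, dotProduct, Finset.mul_sum]
                  exact Finset.sum_comm
              _ = 1 := by
                  rw [← ihk]
                  exact Finset.sum_congr rfl fun x _ => by rw [hG.2 x, mul_one]
        rw [this n, hπ.2]; ring
      have hv : ∑ x, (Matrix.vecMul π₀ (G ^ n) - π) x = 0 := by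
        simpa [Finset.sum_sub_distrib] using hsum
      have h := doeblin_contract_step G hG δ hlb (Matrix.vecMul π₀ (G ^ n) - π) hv
      rw [← hsub] at h
      calc ∑ x, |Matrix.vecMul π₀ (G ^ (n + 1)) x - π x|
          = ∑ y, |(Matrix.vecMul (Matrix.vecMul π₀ (G ^ n)) G - π) y| := by
            rw [pow_succ, ← Matrix.vecMul_vecMul]
            exact Finset.sum_congr rfl fun y _ => by simp [Pi.sub_apply]
        _ ≤ (1 - m * δ) * ∑ x, |(Matrix.vecMul π₀ (G ^ n) - π) x| := h
        _ = (1 - m * δ) * ∑ x, |Matrix.vecMul π₀ (G ^ n) x - π x| := by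
            simp [Pi.sub_apply]
        _ ≤ (1 - m * δ) * ((1 - m * δ) ^ n * ∑ x, |π₀ x - π x|) :=
            mul_le_mul_of_nonneg_left ih hmδ0
        _ = (1 - m * δ) ^ (n + 1) * ∑ x, |π₀ x - π x| := by ring
end
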